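/- View the edge set of the Aztec diamond graph AD_n as a 2n × 2n array (edge in row r, column c being the edge whose midpoint is the (r,c) position of the array of edge-midpoints). Partition the edges into n+1 classes: for i = 1,…,n-1, the edges in rows 2i and 2i+1 form a class, and the edges of row 1 and of row 2n form two further classes. Then every perfect matching of AD_n contains exactly n edges in each of these n+1 classes. -/

import Mathlib

/-- The set of unit squares of the Aztec diamond region of order `n`:
`p : ℤ × ℤ` encodes the unit square with center `(p.1 + 1/2, p.2 + 1/2)`. -/
def aztecSet (n : ℕ) : Set (ℤ × ℤ) :=
  {p | |2 * p.1 + 1| + |2 * p.2 + 1| ≤ 2 * n}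

/-- The Aztec diamond graph `AD_n`. -/
def aztecDiamond (n : ℕ) : SimpleGraph (aztecSet n) :=
  SimpleGraph.fromRel
    (fun u v => |(u : ℤ × ℤ).1 - (v : ℤ × ℤ).1| + |(u : ℤ × ℤ).2 - (v : ℤ × ℤ).2| = 1)

/-- The sum of all four coordinates of the two endpoints of an edge. -/
def edgeCoordSum : Sym2 (ℤ × ℤ) → ℤ :=
  Sym2.lift ⟨fun p q => p.1 + q.1 + p.2 + q.2, by intros; ring⟩

/-- The row index of an edge of `AD_n` in the `2n × 2n` array of edge-midpoints:
the midpoint of the edge `{p, q}` has coordinate sum `u = (edgeCoordSum + 2)/2`,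
with `2u` ranging over the odd integers from `-(2n-1)` to `2n-1`; row `r`
corresponds to `2u = 2r - (2n+1)`. -/
def rowIdx (n : ℕ) (e : Sym2 (aztecSet n)) : ℤ :=
  (edgeCoordSum (e.map Subtype.val) + 2 + 2 * n + 1) / 2

-- diagonal bounds
lemma diag_bounds {n : ℕ} (v : aztecSet n) :
    -(n:ℤ) - 1 ≤ (v:ℤ×ℤ).1 + (v:ℤ×ℤ).2 ∧ (v:ℤ×ℤ).1 + (v:ℤ×ℤ).2 ≤ (n:ℤ) - 1 := by
  have h := v.2
  simp only [aztecSet, Set.mem_setOf_eq] at h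
  rcases abs_cases (2*(v:ℤ×ℤ).1+1) with ⟨h1,_⟩|⟨h1,_⟩ <;>
    rcases abs_cases (2*(v:ℤ×ℤ).2+1) with ⟨h2,_⟩|⟨h2,_⟩ <;> omega

-- adjacency: diagonals differ by one
lemma adj_diag {n : ℕ} {u v : aztecSet n} (h : (aztecDiamond n).Adj u v) :
    ((u:ℤ×ℤ).1 + (u:ℤ×ℤ).2 = (v:ℤ×ℤ).1 + (v:ℤ×ℤ).2 + 1) ∨
    ((v:ℤ×ℤ).1 + (v:ℤ×ℤ).2 = (u:ℤ×ℤ).1 + (u:ℤ×ℤ).2 + 1) := by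
  rw [aztecDiamond, SimpleGraph.fromRel_adj] at h
  have h' : |(u:ℤ×ℤ).1 - (v:ℤ×ℤ).1| + |(u:ℤ×ℤ).2 - (v:ℤ×ℤ).2| = 1 := by
    rcases h.2 with h2 | h2
    · exact h2
    · rw [abs_sub_comm ((v:ℤ×ℤ).1), abs_sub_comm ((v:ℤ×ℤ).2)] at h2; exact h2
  rcases abs_cases ((u:ℤ×ℤ).1 - (v:ℤ×ℤ).1) with ⟨h1,_⟩|⟨h1,_⟩ <;>
    rcases abs_cases ((u:ℤ×ℤ).2 - (v:ℤ×ℤ).2) with ⟨h2,_⟩|⟨h2,_⟩ <;> omega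

lemma rowIdx_pair {n : ℕ} (u v : aztecSet n) :
    rowIdx n s(u, v) =
      ((u:ℤ×ℤ).1 + (u:ℤ×ℤ).2 + ((v:ℤ×ℤ).1 + (v:ℤ×ℤ).2) + 2 + 2*n + 1) / 2 := by
  simp only [rowIdx, Sym2.map_pair_eq, edgeCoordSum, Sym2.lift_mk]
  ring_nf

lemma touch_pair {n : ℕ} {k : ℤ} (u v : aztecSet n) :
    (∃ p ∈ s(u,v), (p:ℤ×ℤ).1 + (p:ℤ×ℤ).2 = k) ↔
      ((u:ℤ×ℤ).1 + (u:ℤ×ℤ).2 = k ∨ (v:ℤ×ℤ).1 + (v:ℤ×ℤ).2 = k) := by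
  constructor
  · rintro ⟨p, hp, hk⟩
    rcases Sym2.mem_iff.mp hp with h | h <;> subst h
    · exact Or.inl hk
    · exact Or.inr hk
  · rintro (h | h)
    · exact ⟨u, Sym2.mem_mk_left _ _, h⟩
    · exact ⟨v, Sym2.mem_mk_right _ _, h⟩

lemma diag_count (n : ℕ) (k m : ℤ) (hk1 : -(n:ℤ) - 1 ≤ k) (hk2 : k ≤ (n:ℤ) - 1)
    (hm : (n:ℤ) + k = 2*m + 1) :
    {v : aztecSet n | (v:ℤ×ℤ).1 + (v:ℤ×ℤ).2 = k}.ncard = n := by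
  have himg : Subtype.val '' {v : aztecSet n | (v:ℤ×ℤ).1 + (v:ℤ×ℤ).2 = k} =
      ↑((Finset.Icc (m+1-n) m).image (fun x : ℤ => (x, k - x))) := by
    ext p
    simp only [Set.mem_image, Set.mem_setOf_eq, Finset.coe_image, Finset.coe_Icc,
      Subtype.exists, exists_and_right, exists_eq_right]
    constructor
    · rintro ⟨hp, hd⟩
      have hp' : |2 * p.1 + 1| + |2 * p.2 + 1| ≤ 2 * n := hp
      refine ⟨p.1, ?_, ?_⟩
      · rcases abs_cases (2*p.1+1) with ⟨h1,_⟩|⟨h1,_⟩ <;>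
          rcases abs_cases (2*p.2+1) with ⟨h2,_⟩|⟨h2,_⟩ <;>
          constructor <;> omega
      · have : p.2 = k - p.1 := by omega
        rw [← this]
    · rintro ⟨x, ⟨hx1, hx2⟩, rfl⟩
      refine ⟨?_, by ring⟩
      show |2 * x + 1| + |2 * (k - x) + 1| ≤ 2 * n
      rcases abs_cases (2*x+1) with ⟨h1,_⟩|⟨h1,_⟩ <;>
        rcases abs_cases (2*(k-x)+1) with ⟨h2,_⟩|⟨h2,_⟩ <;> omega
  have hinj := Set.ncard_image_of_injective
    {v : aztecSet n | (v:ℤ×ℤ).1 + (v:ℤ×ℤ).2 = k} (Subtype.val_injective (p := (· ∈ aztecSet n)))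
  rw [himg, Set.ncard_coe_finset,
    Finset.card_image_of_injective _ (fun a b h => by simpa using congrArg Prod.fst h),
    Int.card_Icc] at hinj
  omega

lemma key (n : ℕ) (k m : ℤ) (hk1 : -(n:ℤ) - 1 ≤ k) (hk2 : k ≤ (n:ℤ) - 1)
    (hm : (n:ℤ) + k = 2*m + 1)
    (M : (aztecDiamond n).Subgraph) (hM : M.IsPerfectMatching) :
    {e ∈ M.edgeSet | ∃ p ∈ e, (p:ℤ×ℤ).1 + (p:ℤ×ℤ).2 = k}.ncard = n := by
  obtain ⟨hmat, hsp⟩ := hM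
  set D := {v : aztecSet n | (v:ℤ×ℤ).1 + (v:ℤ×ℤ).2 = k} with hD
  set f : aztecSet n → Sym2 (aztecSet n) :=
    fun v => (hmat.toEdge ⟨v, hsp v⟩ : M.edgeSet).val with hf
  have hfv : ∀ v : aztecSet n, ∃ w, M.Adj v w ∧ f v = s(v, w) := by
    intro v
    exact ⟨(hmat (hsp v)).choose, (hmat (hsp v)).choose_spec.1, rfl⟩
  have hbij : Set.BijOn f D {e ∈ M.edgeSet | ∃ p ∈ e, (p:ℤ×ℤ).1 + (p:ℤ×ℤ).2 = k} := by
    refine ⟨?_, ?_, ?_⟩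
    · intro v hv
      obtain ⟨w, hadj, hfw⟩ := hfv v
      exact ⟨hfw ▸ SimpleGraph.Subgraph.mem_edgeSet.mpr hadj,
        v, hfw ▸ Sym2.mem_mk_left _ _, hv⟩
    · intro v1 h1 v2 h2 heq
      obtain ⟨w1, ha1, hf1⟩ := hfv v1
      obtain ⟨w2, ha2, hf2⟩ := hfv v2
      rw [hf1, hf2, Sym2.eq_iff] at heq
      rcases heq with ⟨h, _⟩ | ⟨hvw, hwv⟩
      · exact h
      · exfalso
        have hadj : M.Adj v2 v1 := hvw ▸ ha2
        have := adj_diag (M.adj_sub hadj)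
        have e1 : (v1:ℤ×ℤ).1 + (v1:ℤ×ℤ).2 = k := h1
        have e2 : (v2:ℤ×ℤ).1 + (v2:ℤ×ℤ).2 = k := h2
        omega
    · rintro e ⟨he, p, hpe, hpk⟩
      induction e using Sym2.ind with
      | _ u v =>
        have hadj : M.Adj u v := SimpleGraph.Subgraph.mem_edgeSet.mp he
        rcases Sym2.mem_iff.mp hpe with h | h <;> subst h
        · refine ⟨p, hpk, ?_⟩
          have := hmat.toEdge_eq_of_adj hadj
          simp only [hf, this]
        · refine ⟨p, hpk, ?_⟩
          have := hmat.toEdge_eq_of_adj hadj.symm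
          simp only [hf, this]
          exact Sym2.eq_swap
  rw [← hbij.image_eq, Set.ncard_image_of_injOn hbij.injOn]
  exact diag_count n k m hk1 hk2 hm

lemma classCount (n : ℕ) (M : (aztecDiamond n).Subgraph) (hM : M.IsPerfectMatching)
    (k m : ℤ) (P : ℤ → Prop) (hk1 : -(n:ℤ)-1 ≤ k) (hk2 : k ≤ (n:ℤ)-1)
    (hm : (n:ℤ)+k = 2*m+1)
    (hP : ∀ a b : ℤ, b = a + 1 → -(n:ℤ)-1 ≤ a → b ≤ (n:ℤ)-1 →
      (P (a+(n:ℤ)+2) ↔ (a = k ∨ b = k))) :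
    {e ∈ M.edgeSet | P (rowIdx n e)}.ncard = n := by
  have hset : {e ∈ M.edgeSet | P (rowIdx n e)} =
      {e ∈ M.edgeSet | ∃ p ∈ e, (p:ℤ×ℤ).1+(p:ℤ×ℤ).2 = k} := by
    ext e
    induction e using Sym2.ind with
    | _ u v =>
      simp only [Set.mem_setOf_eq]
      refine and_congr_right fun he => ?_
      have hadj := M.adj_sub (SimpleGraph.Subgraph.mem_edgeSet.mp he)
      have hd := adj_diag hadj
      obtain ⟨hbu1, hbu2⟩ := diag_bounds u
      obtain ⟨hbv1, hbv2⟩ := diag_bounds v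
      rw [rowIdx_pair, touch_pair]
      rcases hd with h | h
      · have e1 : ((u:ℤ×ℤ).1 + (u:ℤ×ℤ).2 + ((v:ℤ×ℤ).1 + (v:ℤ×ℤ).2) + 2 + 2*(n:ℤ) + 1)/2
            = ((v:ℤ×ℤ).1+(v:ℤ×ℤ).2) + (n:ℤ) + 2 := by omega
        rw [e1, hP _ _ h hbv1 hbu2]
        exact or_comm
      · have e1 : ((u:ℤ×ℤ).1 + (u:ℤ×ℤ).2 + ((v:ℤ×ℤ).1 + (v:ℤ×ℤ).2) + 2 + 2*(n:ℤ) + 1)/2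
            = ((u:ℤ×ℤ).1+(u:ℤ×ℤ).2) + (n:ℤ) + 2 := by omega
        rw [e1, hP _ _ h hbu1 hbv2]
  rw [hset]
  exact key n k m hk1 hk2 hm M hM

theorem aztecDiamond_row_classes (n : ℕ)
    (M : (aztecDiamond n).Subgraph) (hM : M.IsPerfectMatching) :
    (∀ i : ℕ, 1 ≤ i → i ≤ n - 1 →
      {e ∈ M.edgeSet | rowIdx n e = 2 * i ∨ rowIdx n e = 2 * i + 1}.ncard = n) ∧
    {e ∈ M.edgeSet | rowIdx n e = 1}.ncard = n ∧
    {e ∈ M.edgeSet | rowIdx n e = 2 * n}.ncard = n := by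
  refine ⟨fun i hi1 hi2 => ?_, ?_, ?_⟩
  · exact classCount n M hM (2*(i:ℤ)-(n:ℤ)-1) ((i:ℤ)-1)
      (fun r => r = 2*(i:ℤ) ∨ r = 2*(i:ℤ)+1) (by omega) (by omega) (by omega)
      (fun a b hb h1 h2 => by omega)
  · exact classCount n M hM (-(n:ℤ)-1) (-1) (fun r => r = 1) (by omega) (by omega) (by omega)
      (fun a b hb h1 h2 => by omega)
  · exact classCount n M hM ((n:ℤ)-1) ((n:ℤ)-1) (fun r => r = 2*(n:ℤ)) (by omega) (by omega)
      (by omega) (fun a b hb h1 h2 => by omega)
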